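/- Let a ∈ Z^n_{≥0}, b ∈ Z_{≥0}, and P = {x ∈ [0,1]^n : 2a^⊤x ≤ 2b+1}. Then a vertex x of P is non-integral if and only if 2a^⊤x = 2b+1; consequently {x ∈ {0,1}^n : a^⊤x ≤ b} = V(P) \ V(F), where F is the face of P defined by 2a^⊤x = 2b+1. -/

import Mathlib

open Finset

/-- If a positive combination of two nonnegatives is zero, both are zero. -/
private lemma pos_comb_zero {t s u v : ℝ} (ht : 0 < t) (hs : 0 < s)
    (hu : 0 ≤ u) (hv : 0 ≤ v) (h : t * u + s * v = 0) : u = 0 ∧ v = 0 := by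
  have h1 : t * u = 0 := by nlinarith [mul_nonneg ht.le hu, mul_nonneg hs.le hv]
  have h2 : s * v = 0 := by nlinarith [mul_nonneg ht.le hu, mul_nonneg hs.le hv]
  exact ⟨(mul_eq_zero.mp h1).resolve_left (ne_of_gt ht),
    (mul_eq_zero.mp h2).resolve_left (ne_of_gt hs)⟩

/-- A 0/1 point of any subset of the cube is an extreme point of that subset. -/
private lemma binary_extreme {n : ℕ} {P : Set (Fin n → ℝ)}
    (hPc : ∀ y ∈ P, ∀ i, 0 ≤ y i ∧ y i ≤ 1) {x : Fin n → ℝ}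
    (hxP : x ∈ P) (hx : ∀ i, x i = 0 ∨ x i = 1) : x ∈ Set.extremePoints ℝ P := by
  refine ⟨hxP, ?_⟩
  rintro y hy z hz ⟨t, s, ht, hs, hts, hxyz⟩
  have hco : ∀ i, t * y i + s * z i = x i := by
    intro i; have := congrFun hxyz i; simpa using this
  have hy' := hPc y hy
  have hz' := hPc z hz
  have key : ∀ i, y i = x i ∧ z i = x i := by
    intro i
    rcases hx i with h0 | h1
    · have h := hco i
      rw [h0] at h ⊢
      exact pos_comb_zero ht hs (hy' i).1 (hz' i).1 h
    · have h := hco i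
      rw [h1] at h ⊢
      have h' : t * (1 - y i) + s * (1 - z i) = 0 := by ring_nf; linarith
      have := pos_comb_zero ht hs (by linarith [(hy' i).2]) (by linarith [(hz' i).2]) h'
      constructor <;> linarith [this.1, this.2]
  exact funext fun i => (key i).1

theorem knapsack_forb_face (n : ℕ) (a : Fin n → ℤ) (ha : ∀ i, 0 ≤ a i) (b : ℤ) (hb : 0 ≤ b)
    (P : Set (Fin n → ℝ))
    (hP : P = {x | (∀ i, 0 ≤ x i ∧ x i ≤ 1) ∧
      2 * ∑ i, (a i : ℝ) * x i ≤ 2 * (b : ℝ) + 1})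
    (F : Set (Fin n → ℝ))
    (hF : F = {x ∈ P | 2 * ∑ i, (a i : ℝ) * x i = 2 * (b : ℝ) + 1}) :
    (∀ x ∈ Set.extremePoints ℝ P,
      ((¬ ∀ i, x i = 0 ∨ x i = 1) ↔ 2 * ∑ i, (a i : ℝ) * x i = 2 * (b : ℝ) + 1)) ∧
    {x : Fin n → ℝ | (∀ i, x i = 0 ∨ x i = 1) ∧ ∑ i, (a i : ℝ) * x i ≤ (b : ℝ)} =
      Set.extremePoints ℝ P \ Set.extremePoints ℝ F := by
  classical
  subst hP hF
  -- notation
  set L : (Fin n → ℝ) → ℝ := fun x => ∑ i, (a i : ℝ) * x i with hL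
  -- integrality of L on binary points
  have hint : ∀ x : Fin n → ℝ, (∀ i, x i = 0 ∨ x i = 1) → ∃ m : ℤ, L x = (m : ℝ) := by
    intro x hx
    refine ⟨∑ i, if x i = 1 then a i else 0, ?_⟩
    rw [hL]
    push_cast
    refine Finset.sum_congr rfl fun i _ => ?_
    rcases hx i with h | h <;> simp [h]
  -- binary points never satisfy the tight equality (parity)
  have hparity : ∀ x : Fin n → ℝ, (∀ i, x i = 0 ∨ x i = 1) →
      2 * L x ≠ 2 * (b : ℝ) + 1 := by
    intro x hx heq
    obtain ⟨m, hm⟩ := hint x hx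
    rw [hm] at heq
    have : (2 * m : ℝ) = ((2 * b + 1 : ℤ) : ℝ) := by push_cast; linarith
    have : (2 * m : ℤ) = 2 * b + 1 := by exact_mod_cast this
    omega
  -- extreme point with slack is binary
  have hslack : ∀ x ∈ Set.extremePoints ℝ {x | (∀ i, 0 ≤ x i ∧ x i ≤ 1) ∧
      2 * L x ≤ 2 * (b : ℝ) + 1}, 2 * L x < 2 * (b : ℝ) + 1 →
      ∀ i, x i = 0 ∨ x i = 1 := by
    intro x hx hlt i
    by_contra hcon
    push_neg at hcon
    obtain ⟨hne0, hne1⟩ := hcon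
    obtain ⟨⟨hcube, hcons⟩, hext⟩ := hx
    have h0 : 0 < x i := lt_of_le_of_ne (hcube i).1 (Ne.symm hne0)
    have h1 : x i < 1 := lt_of_le_of_ne (hcube i).2 hne1
    set δ : ℝ := 2 * (b : ℝ) + 1 - 2 * L x with hδ
    have hδpos : 0 < δ := by linarith
    have hden : (0 : ℝ) < 2 * (a i : ℝ) + 1 := by
      have := ha i; positivity
    set ε : ℝ := min (min (x i) (1 - x i)) (δ / (2 * (a i : ℝ) + 1)) with hε
    have hεpos : 0 < ε := by
      apply lt_min (lt_min h0 (by linarith))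
      positivity
    have hε1 : ε ≤ x i := le_trans (min_le_left _ _) (min_le_left _ _)
    have hε2 : ε ≤ 1 - x i := le_trans (min_le_left _ _) (min_le_right _ _)
    have hε3 : ε ≤ δ / (2 * (a i : ℝ) + 1) := min_le_right _ _
    have hai : (0 : ℝ) ≤ (a i : ℝ) := by exact_mod_cast ha i
    have haiε : 2 * (a i : ℝ) * ε ≤ δ := by
      have h4 : 2 * (a i : ℝ) * ε ≤ 2 * (a i : ℝ) * (δ / (2 * (a i : ℝ) + 1)) := by
        apply mul_le_mul_of_nonneg_left hε3 (by positivity)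
      have h5 : 2 * (a i : ℝ) * (δ / (2 * (a i : ℝ) + 1)) ≤ δ := by
        rw [div_eq_inv_mul]
        rw [ mul_comm ((2 * (a i : ℝ) + 1)⁻¹) δ, ← mul_assoc]
        rw [mul_inv_le_iff₀ hden]
        nlinarith
      linarith
    -- sum under coordinate update
    have key : ∀ c : ℝ, L (Function.update x i c) = L x + (a i : ℝ) * (c - x i) := by
      intro c
      rw [hL]
      have h1 : ∀ j : Fin n, (a j : ℝ) * Function.update x i c j
          = (a j : ℝ) * x j + (if j = i then (a i : ℝ) * (c - x i) else 0) := by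
        intro j
        by_cases h : j = i
        · subst h; simp [Function.update_self]; ring
        · simp [Function.update_of_ne h, h]
      simp only [h1]
      rw [Finset.sum_add_distrib, Finset.sum_ite_eq' Finset.univ i]
      simp
    set y := Function.update x i (x i - ε) with hy
    set z := Function.update x i (x i + ε) with hz
    have hymem : y ∈ {x | (∀ i, 0 ≤ x i ∧ x i ≤ 1) ∧ 2 * L x ≤ 2 * (b : ℝ) + 1} := by
      constructor
      · intro j
        by_cases h : j = i
        · subst h; rw [hy, Function.update_self]
          constructor <;> [linarith; linarith [(hcube j).2]]
        · rw [hy, Function.update_of_ne h]; exact hcube j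
      · rw [hy, key]
        nlinarith [mul_nonneg hai hεpos.le]
    have hzmem : z ∈ {x | (∀ i, 0 ≤ x i ∧ x i ≤ 1) ∧ 2 * L x ≤ 2 * (b : ℝ) + 1} := by
      constructor
      · intro j
        by_cases h : j = i
        · subst h; rw [hz, Function.update_self]
          constructor <;> [linarith [(hcube j).1]; linarith]
        · rw [hz, Function.update_of_ne h]; exact hcube j
      · rw [hz, key]
        nlinarith
    have hseg : x ∈ openSegment ℝ y z := by
      refine ⟨1/2, 1/2, by norm_num, by norm_num, by norm_num, ?_⟩
      funext j
      by_cases h : j = i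
      · subst h
        simp [hy, hz, Function.update_self]
        ring
      · simp [hy, hz, Function.update_of_ne h]
        ring
    have := hext hymem hzmem hseg
    have : y i = x i := by rw [this]
    rw [hy, Function.update_self] at this
    linarith
  -- extreme point of P lying in F is extreme point of F
  have hPF : ∀ x ∈ Set.extremePoints ℝ {x | (∀ i, 0 ≤ x i ∧ x i ≤ 1) ∧
      2 * L x ≤ 2 * (b : ℝ) + 1}, 2 * L x = 2 * (b : ℝ) + 1 →
      x ∈ Set.extremePoints ℝ {x ∈ {x | (∀ i, 0 ≤ x i ∧ x i ≤ 1) ∧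
        2 * L x ≤ 2 * (b : ℝ) + 1} | 2 * L x = 2 * (b : ℝ) + 1} := by
    rintro x ⟨hxP, hext⟩ hxF
    refine ⟨⟨hxP, hxF⟩, ?_⟩
    intro y hy z hz hseg
    exact hext hy.1 hz.1 hseg
  -- part (a)
  have parta : ∀ x ∈ Set.extremePoints ℝ {x | (∀ i, 0 ≤ x i ∧ x i ≤ 1) ∧
      2 * L x ≤ 2 * (b : ℝ) + 1},
      ((¬ ∀ i, x i = 0 ∨ x i = 1) ↔ 2 * L x = 2 * (b : ℝ) + 1) := by
    intro x hx
    constructor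
    · intro hni
      by_contra hne
      have hlt : 2 * L x < 2 * (b : ℝ) + 1 := lt_of_le_of_ne hx.1.2 hne
      exact hni (hslack x hx hlt)
    · intro heq hbin
      exact hparity x hbin heq
  refine ⟨parta, ?_⟩
  ext x
  simp only [Set.mem_setOf_eq, Set.mem_diff]
  constructor
  · rintro ⟨hbin, hle⟩
    have hxP : x ∈ {x | (∀ i, 0 ≤ x i ∧ x i ≤ 1) ∧ 2 * L x ≤ 2 * (b : ℝ) + 1} := by
      refine ⟨fun i => ?_, by linarith⟩
      rcases hbin i with h | h <;> simp [h]
    have hxext : x ∈ Set.extremePoints ℝ {x | (∀ i, 0 ≤ x i ∧ x i ≤ 1) ∧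
        2 * L x ≤ 2 * (b : ℝ) + 1} :=
      binary_extreme (fun y hy => hy.1) hxP hbin
    refine ⟨hxext, fun hxF => ?_⟩
    exact hparity x hbin hxF.1.2
  · rintro ⟨hxP, hxnF⟩
    have hbin : ∀ i, x i = 0 ∨ x i = 1 := by
      by_contra hni
      have hxF := (parta x hxP).mp hni
      exact hxnF (hPF x hxP hxF)
    refine ⟨hbin, ?_⟩
    -- L x is an integer with 2 L x ≤ 2b + 1, hence L x ≤ b
    obtain ⟨m, hm⟩ := hint x hbin
    have hm' : (∑ i, (a i : ℝ) * x i) = (m : ℝ) := hm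
    have hle : 2 * (m : ℝ) ≤ 2 * (b : ℝ) + 1 := by
      have := hxP.1.2; rw [hm'] at this; exact this
    rw [hm']
    have : (2 * m : ℤ) ≤ 2 * b + 1 := by exact_mod_cast (by push_cast; linarith : (2*m:ℝ) ≤ ((2*b+1:ℤ):ℝ))
    have : m ≤ b := by omega
    exact_mod_cast this
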